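/- P_sub = 0 if and only if μ₁ = μ₂. -/

import Mathlib

open MeasureTheory Set Filter Topology

noncomputable section

/-- The log-contract payoff `L(x) = -(2/τ) ln x`. -/
def Lf (τ x : ℝ) : ℝ := -(2 / τ) * Real.log x

/-- `μ` is a market smile: a probability measure concentrated on `(0,∞)`
with mean `S₀` and integrable logarithm. -/
structure IsMarginal (S₀ : ℝ) (μ : Measure ℝ) : Prop where
  prob : IsProbabilityMeasure μ
  conc : μ (Set.Ioi (0 : ℝ))ᶜ = 0
  int_id : Integrable (fun s => s) μ
  mean : (∫ s, s ∂μ) = S₀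
  int_log : Integrable (fun s => |Real.log s|) μ

/-- A subreplicating portfolio for the VIX future. -/
structure IsSubRep (τ : ℝ) (μ₁ μ₂ : Measure ℝ) (u₁ u₂ : ℝ → ℝ)
    (ΔS ΔL : ℝ → ℝ → ℝ) : Prop where
  meas_u₁ : Measurable u₁
  meas_u₂ : Measurable u₂
  meas_ΔS : Measurable (Function.uncurry ΔS)
  meas_ΔL : Measurable (Function.uncurry ΔL)
  int_u₁ : Integrable u₁ μ₁
  int_u₂ : Integrable u₂ μ₂
  hedge : ∀ s₁ s₂ v : ℝ, 0 < s₁ → 0 < s₂ → 0 ≤ v →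
    u₁ s₁ + u₂ s₂ + ΔS s₁ v * (s₂ - s₁) + ΔL s₁ v * (Lf τ (s₂ / s₁) - v ^ 2) ≤ v

/-- `P_sub`: the supremum of subreplication prices, as an extended real. -/
def PsubE (τ : ℝ) (μ₁ μ₂ : Measure ℝ) : EReal :=
  sSup {y : EReal | ∃ u₁ u₂ ΔS ΔL, IsSubRep τ μ₁ μ₂ u₁ u₂ ΔS ΔL ∧
    y = (((∫ s, u₁ s ∂μ₁) + ∫ s, u₂ s ∂μ₂ : ℝ) : EReal)}

section VixAux

variable {τ S₀ : ℝ} {μ₁ μ₂ : Measure ℝ}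

-- AUX

lemma abs_min_le_add (s K : ℝ) : |min s K| ≤ |s| + |K| := by
  rcases le_total s K with h | h
  · rw [min_eq_left h]; nlinarith [abs_nonneg K, le_abs_self s, neg_abs_le s]
  · rw [min_eq_right h]; nlinarith [abs_nonneg s, le_abs_self K, neg_abs_le K]

lemma integrable_min_const {μ : Measure ℝ} [IsFiniteMeasure μ]
    (h : Integrable (fun s => s) μ) (K : ℝ) :
    Integrable (fun s => min s K) μ := by
  refine Integrable.mono' (h.abs.add (integrable_const |K|))
    ((measurable_id.min measurable_const).aestronglyMeasurable) ?_
  filter_upwards with s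
  simpa [Real.norm_eq_abs] using abs_min_le_add s K

lemma integrable_log' {μ : Measure ℝ} (h : Integrable (fun s => |Real.log s|) μ) :
    Integrable (fun s => Real.log s) μ :=
  h.mono' Real.measurable_log.aestronglyMeasurable
    (by filter_upwards with s; simp [Real.norm_eq_abs])

lemma ae_pos {μ : Measure ℝ} (h : μ (Set.Ioi (0:ℝ))ᶜ = 0) : ∀ᵐ s ∂μ, 0 < s := by
  have he : {s : ℝ | ¬ 0 < s} = (Set.Ioi (0:ℝ))ᶜ := by ext s; simp
  rw [ae_iff, he]; exact h

lemma min_lip (a b c : ℝ) : |min a b - min a c| ≤ |b - c| := by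
  rcases le_total a b with h1 | h1 <;> rcases le_total a c with h2 | h2 <;>
    rcases abs_cases (b - c) with ⟨h3, h4⟩ | ⟨h3, h4⟩ <;>
    rw [abs_le] <;> constructor <;>
    simp [min_eq_left, min_eq_right, h1, h2] <;> linarith

lemma price_nonpos {τ : ℝ} {μ₁ μ₂ : Measure ℝ} (hP : PsubE τ μ₁ μ₂ = 0)
    {u₁ u₂ : ℝ → ℝ} {ΔS ΔL : ℝ → ℝ → ℝ} (h : IsSubRep τ μ₁ μ₂ u₁ u₂ ΔS ΔL) :
    (∫ s, u₁ s ∂μ₁) + ∫ s, u₂ s ∂μ₂ ≤ 0 := by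
  have h2 : (((∫ s, u₁ s ∂μ₁) + ∫ s, u₂ s ∂μ₂ : ℝ) : EReal) ≤ PsubE τ μ₁ μ₂ :=
    le_sSup ⟨u₁, u₂, ΔS, ΔL, h, rfl⟩
  rw [hP] at h2
  exact_mod_cast h2

lemma call_le {τ S₀ : ℝ} {μ₁ μ₂ : Measure ℝ}
    (h₁ : IsMarginal S₀ μ₁) (h₂ : IsMarginal S₀ μ₂)
    (hP : PsubE τ μ₁ μ₂ = 0) (K : ℝ) :
    ∫ s, min s K ∂μ₂ ≤ ∫ s, min s K ∂μ₁ := by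
  haveI := h₁.prob; haveI := h₂.prob
  have hrep : IsSubRep τ μ₁ μ₂ (fun s => - min s K) (fun s => min s K)
      (fun s _ => if s < K then (-1:ℝ) else 0) (fun _ _ => 0) := by
    constructor
    · exact (measurable_id.min measurable_const).neg
    · exact measurable_id.min measurable_const
    · exact Measurable.ite (measurableSet_lt measurable_fst measurable_const)
        measurable_const measurable_const
    · exact measurable_const
    · exact (integrable_min_const h₁.int_id K).neg
    · exact integrable_min_const h₂.int_id K
    · intro s₁ s₂ v hs₁ hs₂ hv
      simp only [zero_mul, add_zero]
      rcases lt_or_ge s₁ K with h | h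
      · rw [if_pos h, min_eq_left h.le]
        have := min_le_left s₂ K
        linarith
      · rw [if_neg (not_lt.mpr h), min_eq_right h]
        have := min_le_right s₂ K
        linarith
  have hp := price_nonpos hP hrep
  rw [integral_neg] at hp
  linarith

lemma log_le₂ {τ S₀ : ℝ} (hτ : 0 < τ) {μ₁ μ₂ : Measure ℝ}
    (h₁ : IsMarginal S₀ μ₁) (h₂ : IsMarginal S₀ μ₂)
    (hP : PsubE τ μ₁ μ₂ = 0) :
    ∫ s, Real.log s ∂μ₂ ≤ ∫ s, Real.log s ∂μ₁ := by
  have hrep : IsSubRep τ μ₁ μ₂ (fun s => - Real.log s) (fun s => Real.log s)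
      (fun _ _ => 0) (fun _ _ => τ/2) := by
    constructor
    · exact Real.measurable_log.neg
    · exact Real.measurable_log
    · exact measurable_const
    · exact measurable_const
    · exact (integrable_log' h₁.int_log).neg
    · exact integrable_log' h₂.int_log
    · intro s₁ s₂ v hs₁ hs₂ hv
      have hlog : Lf τ (s₂ / s₁) = -(2/τ) * (Real.log s₂ - Real.log s₁) := by
        rw [Lf, Real.log_div hs₂.ne' hs₁.ne']
      rw [hlog]
      have h2 : τ/2 * (-(2/τ) * (Real.log s₂ - Real.log s₁) - v^2)
          = -(Real.log s₂ - Real.log s₁) - (τ/2) * v^2 := by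
        field_simp
      rw [h2]
      nlinarith [sq_nonneg v]
  have hp := price_nonpos hP hrep
  rw [integral_neg] at hp
  linarith

-- integrability of capped log payoffs
lemma integrable_min_log {μ : Measure ℝ} [IsFiniteMeasure μ]
    (h : Integrable (fun s => |Real.log s|) μ) (c M : ℝ) :
    Integrable (fun s => min (c * Real.log s) M) μ := by
  refine Integrable.mono' ((h.const_mul |c|).add (integrable_const |M|))
    ((Real.measurable_log.const_mul c).min measurable_const).aestronglyMeasurable ?_
  filter_upwards with s
  have := abs_min_le_add (c * Real.log s) M
  rw [abs_mul] at this
  simpa [Real.norm_eq_abs] using this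

lemma eps_ineq (hτ : 0 < τ) (h₁ : IsMarginal S₀ μ₁) (h₂ : IsMarginal S₀ μ₂)
    (hP : ∀ {u₁ u₂ : ℝ → ℝ} {ΔS ΔL : ℝ → ℝ → ℝ}, IsSubRep τ μ₁ μ₂ u₁ u₂ ΔS ΔL →
      (∫ s, u₁ s ∂μ₁) + ∫ s, u₂ s ∂μ₂ ≤ 0)
    {ε : ℝ} (hε : 0 < ε) :
    (∫ s, min ((2/τ) * Real.log s) (1/(4*ε^2)) ∂μ₁)
      + ∫ s, min (-((2/τ) * Real.log s)) (1/(4*ε^2)) ∂μ₂ ≤ 0 := by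
  haveI := h₁.prob; haveI := h₂.prob
  have hrep : IsSubRep τ μ₁ μ₂
      (fun s => min ((2*ε/τ) * Real.log s) (1/(4*ε)))
      (fun s => min (-((2*ε/τ) * Real.log s)) (1/(4*ε)))
      (fun _ _ => 0)
      (fun _ v => if v ≤ 1/(2*ε) then -ε else 0) := by
    constructor
    · exact (Real.measurable_log.const_mul _).min measurable_const
    · exact ((Real.measurable_log.const_mul _).neg).min measurable_const
    · exact measurable_const
    · exact Measurable.ite (measurableSet_le measurable_snd measurable_const)
        measurable_const measurable_const
    · exact integrable_min_log h₁.int_log _ _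
    · have := integrable_min_log h₂.int_log (-(2*ε/τ)) (1/(4*ε))
      simpa [neg_mul] using this
    · intro s₁ s₂ v hs₁ hs₂ hv
      simp only [zero_mul, add_zero]
      have hL : ε * Lf τ (s₂ / s₁) = (2*ε/τ) * Real.log s₁ - (2*ε/τ) * Real.log s₂ := by
        rw [Lf, Real.log_div hs₂.ne' hs₁.ne']
        field_simp
        ring
      have hm1 : min ((2*ε/τ) * Real.log s₁) (1/(4*ε)) ≤ (2*ε/τ) * Real.log s₁ :=
        min_le_left _ _
      have hm2 : min (-((2*ε/τ) * Real.log s₂)) (1/(4*ε)) ≤ -((2*ε/τ) * Real.log s₂) :=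
        min_le_left _ _
      have hM1 : min ((2*ε/τ) * Real.log s₁) (1/(4*ε)) ≤ 1/(4*ε) := min_le_right _ _
      have hM2 : min (-((2*ε/τ) * Real.log s₂)) (1/(4*ε)) ≤ 1/(4*ε) := min_le_right _ _
      rcases le_or_gt v (1/(2*ε)) with hcase | hcase
      · rw [if_pos hcase]
        have hεv : ε * v ≤ 1/2 := by
          have h' : ε * (1/(2*ε)) = 1/2 := by
            field_simp
          nlinarith
        nlinarith [sq_nonneg v]
      · rw [if_neg (not_le.mpr hcase)]
        have : (1:ℝ)/(4*ε) + 1/(4*ε) = 1/(2*ε) := by field_simp; ring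
        linarith
  have hp := hP hrep
  have e1 : ∀ s : ℝ, min ((2*ε/τ) * Real.log s) (1/(4*ε))
      = ε * min ((2/τ) * Real.log s) (1/(4*ε^2)) := by
    intro s
    rw [mul_min_of_nonneg _ _ hε.le]
    congr 1
    · ring
    · field_simp
  have e2 : ∀ s : ℝ, min (-((2*ε/τ) * Real.log s)) (1/(4*ε))
      = ε * min (-((2/τ) * Real.log s)) (1/(4*ε^2)) := by
    intro s
    rw [mul_min_of_nonneg _ _ hε.le]
    congr 1
    · ring
    · field_simp
  simp only [e1, e2] at hp
  rw [integral_const_mul, integral_const_mul] at hp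
  nlinarith

lemma log_le₁ (hτ : 0 < τ) (h₁ : IsMarginal S₀ μ₁) (h₂ : IsMarginal S₀ μ₂)
    (hP : ∀ {u₁ u₂ : ℝ → ℝ} {ΔS ΔL : ℝ → ℝ → ℝ}, IsSubRep τ μ₁ μ₂ u₁ u₂ ΔS ΔL →
      (∫ s, u₁ s ∂μ₁) + ∫ s, u₂ s ∂μ₂ ≤ 0) :
    ∫ s, Real.log s ∂μ₁ ≤ ∫ s, Real.log s ∂μ₂ := by
  haveI := h₁.prob; haveI := h₂.prob
  set c : ℕ → ℝ := fun n => 1/(4*(1/((n:ℝ)+1))^2) with hc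
  have hcn : ∀ n : ℕ, c n = ((n:ℝ)+1)^2/4 := by
    intro n
    rw [hc]
    have : ((n:ℝ)+1) ≠ 0 := by positivity
    field_simp
  have hctop : Tendsto c atTop atTop := by
    have hc4 : Tendsto (fun n : ℕ => ((n:ℝ))/4) atTop atTop :=
      tendsto_natCast_atTop_atTop.atTop_div_const (by norm_num)
    exact tendsto_atTop_mono
      (fun n => by rw [hcn]; nlinarith [Nat.cast_nonneg (α := ℝ) n]) hc4
  -- limit lemma for capped integrals
  have key : ∀ (μ : Measure ℝ) (g : ℝ → ℝ), IsProbabilityMeasure μ →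
      Integrable (fun s => |Real.log s|) μ → (∀ s, |g s| ≤ (2/τ) * |Real.log s|) →
      Measurable g →
      Tendsto (fun n => ∫ s, min (g s) (c n) ∂μ) atTop (𝓝 (∫ s, g s ∂μ)) := by
    intro μ g hprob hint hbd hmeas
    apply tendsto_integral_of_dominated_convergence (fun s => (2/τ) * |Real.log s|)
    · intro n
      exact ((hmeas.min measurable_const)).aestronglyMeasurable
    · exact hint.const_mul _
    · intro n
      filter_upwards with s
      rw [Real.norm_eq_abs]
      have h0 : 0 ≤ c n := by rw [hcn]; positivity
      rcases le_total (g s) (c n) with h | h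
      · rw [min_eq_left h]; exact hbd s
      · rw [min_eq_right h]
        rw [abs_of_nonneg h0]
        exact le_trans (le_trans h (le_abs_self _)) (hbd s)
    · filter_upwards with s
      refine Tendsto.congr' ?_ tendsto_const_nhds
      filter_upwards [hctop.eventually_ge_atTop (g s)] with n hn
      exact (min_eq_left hn).symm
  have h1 := key μ₁ (fun s => (2/τ) * Real.log s) h₁.prob h₁.int_log
    (fun s => by rw [abs_mul, abs_of_nonneg (by positivity : (0:ℝ) ≤ 2/τ)])
    (Real.measurable_log.const_mul _)
  have h2 := key μ₂ (fun s => -((2/τ) * Real.log s)) h₂.prob h₂.int_log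
    (fun s => by rw [abs_neg, abs_mul, abs_of_nonneg (by positivity : (0:ℝ) ≤ 2/τ)])
    ((Real.measurable_log.const_mul _).neg)
  have hsum := h1.add h2
  have hle : (∫ s, (2/τ) * Real.log s ∂μ₁) + ∫ s, -((2/τ) * Real.log s) ∂μ₂ ≤ 0 := by
    apply le_of_tendsto hsum
    filter_upwards with n
    exact eps_ineq hτ h₁ h₂ hP (by positivity : (0:ℝ) < 1/((n:ℝ)+1))
  rw [integral_neg, integral_const_mul, integral_const_mul] at hle
  have hτ' : (0:ℝ) < 2/τ := by positivity
  nlinarith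

lemma calc1 {a b : ℝ} (ha : 0 < a) (hab : a ≤ b) :
    IntegrableOn (fun K => (min b K - min a K)/K^2) (Ioi (0:ℝ)) volume ∧
    ∫ K in Ioi (0:ℝ), (min b K - min a K)/K^2 = Real.log b - Real.log a := by
  have hb : 0 < b := lt_of_lt_of_le ha hab
  set f : ℝ → ℝ := fun K => (min b K - min a K)/K^2 with hf
  have e1 : EqOn f (fun _ => (0:ℝ)) (Ioc 0 a) := by
    intro K hK
    simp only [hf]
    rw [min_eq_right (hK.2.trans hab), min_eq_right hK.2]
    simp
  have e2 : EqOn f (fun K => (K - a)/K^2) (Ioc a b) := by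
    intro K hK
    simp only [hf]
    rw [min_eq_right hK.2, min_eq_left hK.1.le]
  have e3 : EqOn f (fun K => (b - a)/K^2) (Ioi b) := by
    intro K hK
    simp only [hf]
    rw [min_eq_left (le_of_lt hK), min_eq_left (hab.trans (le_of_lt hK))]
  -- integrability on the three pieces
  have i1 : IntegrableOn f (Ioc 0 a) volume := by
    rw [integrableOn_congr_fun e1 measurableSet_Ioc]
    exact integrableOn_zero
  have i2 : IntegrableOn f (Ioc a b) volume := by
    have hcont : ContinuousOn f (Icc a b) := by
      apply ContinuousOn.div
      · exact ((continuous_const.min continuous_id).sub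
          (continuous_const.min continuous_id)).continuousOn
      · exact (continuous_pow 2).continuousOn
      · intro K hK
        exact pow_ne_zero _ (ne_of_gt (lt_of_lt_of_le ha hK.1))
    exact (hcont.integrableOn_Icc).mono_set Ioc_subset_Icc_self
  have i3' : IntegrableOn (fun K : ℝ => (b - a)/K^2) (Ioi b) volume := by
    have hr := (integrableOn_Ioi_rpow_of_lt (by norm_num : (-2:ℝ) < -1) hb).const_mul (b-a)
    refine (integrableOn_congr_fun ?_ measurableSet_Ioi).mp hr
    intro K hK
    have hK0 : 0 < K := hb.trans hK
    simp only
    rw [show (-2:ℝ) = -((2:ℕ):ℝ) by norm_num, Real.rpow_neg hK0.le, Real.rpow_natCast,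
      div_eq_mul_inv]
  have i3 : IntegrableOn f (Ioi b) volume := by
    rw [integrableOn_congr_fun e3 measurableSet_Ioi]
    exact i3'
  -- decomposition of the domain
  have hset : Ioi (0:ℝ) = Ioc 0 a ∪ (Ioc a b ∪ Ioi b) := by
    rw [Ioc_union_Ioi_eq_Ioi hab, Ioc_union_Ioi_eq_Ioi ha.le]
  have hint : IntegrableOn f (Ioi (0:ℝ)) volume := by
    rw [hset]; exact i1.union (i2.union i3)
  refine ⟨hint, ?_⟩
  -- compute the three pieces
  have v1 : ∫ K in Ioc (0:ℝ) a, f K = 0 := by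
    rw [setIntegral_congr_fun measurableSet_Ioc e1]
    simp
  have v2 : ∫ K in Ioc a b, f K = (Real.log b + a/b) - (Real.log a + 1) := by
    rw [setIntegral_congr_fun measurableSet_Ioc e2,
      ← intervalIntegral.integral_of_le hab]
    have hder : ∀ x ∈ uIcc a b, HasDerivAt (fun K => Real.log K + a/K) ((x - a)/x^2) x := by
      intro x hx
      rw [uIcc_of_le hab] at hx
      have hx0 : 0 < x := lt_of_lt_of_le ha hx.1
      have hl := Real.hasDerivAt_log hx0.ne'
      have hi := (hasDerivAt_inv hx0.ne').const_mul a
      have hsum := hl.add (by simpa [div_eq_mul_inv] using hi)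
      have e : (x - a)/x^2 = x⁻¹ + -(a * (x^2)⁻¹) := by field_simp; ring
      rw [e]
      exact hsum.congr_of_eventuallyEq (Filter.Eventually.of_forall fun K => by simp [div_eq_mul_inv])
    have hii : IntervalIntegrable (fun K : ℝ => (K - a)/K^2) volume a b := by
      apply ContinuousOn.intervalIntegrable
      apply ContinuousOn.div
      · exact (continuous_id.sub continuous_const).continuousOn
      · exact (continuous_pow 2).continuousOn
      · intro K hK
        rw [uIcc_of_le hab] at hK
        exact pow_ne_zero _ (ne_of_gt (lt_of_lt_of_le ha hK.1))
    rw [intervalIntegral.integral_eq_sub_of_hasDerivAt hder hii]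
    rw [div_self ha.ne']
  have v3 : ∫ K in Ioi b, f K = (b - a)/b := by
    rw [setIntegral_congr_fun measurableSet_Ioi e3]
    have hder : ∀ x ∈ Ici b, HasDerivAt (fun K => -(b-a)/K) ((b - a)/x^2) x := by
      intro x hx
      have hx0 : 0 < x := lt_of_lt_of_le hb hx
      have hi := (hasDerivAt_inv hx0.ne').const_mul (-(b-a))
      have : -(b-a) * -(x^2)⁻¹ = (b-a)/x^2 := by field_simp
      rw [this] at hi
      simpa [div_eq_mul_inv] using hi
    have htend : Tendsto (fun K : ℝ => -(b-a)/K) atTop (𝓝 0) :=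
      tendsto_const_nhds.div_atTop tendsto_id
    rw [integral_Ioi_of_hasDerivAt_of_tendsto' hder i3' htend]
    field_simp
    ring
  rw [hset, setIntegral_union (by rw [Ioc_union_Ioi_eq_Ioi hab]; exact Ioc_disjoint_Ioi le_rfl)
      ((measurableSet_Ioc).union measurableSet_Ioi) i1 (i2.union i3),
    setIntegral_union (Ioc_disjoint_Ioi le_rfl) measurableSet_Ioi i2 i3, v1, v2, v3]
  field_simp
  ring

lemma keyint {x : ℝ} (hx : 0 < x) :
    IntegrableOn (fun K => (min x K - min 1 K)/K^2) (Ioi (0:ℝ)) volume ∧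
    (∫ K in Ioi (0:ℝ), (min x K - min 1 K)/K^2 = Real.log x) ∧
    (∫ K in Ioi (0:ℝ), ‖(min x K - min 1 K)/K^2‖ = |Real.log x|) := by
  rcases le_total 1 x with h | h
  · obtain ⟨hi, hv⟩ := calc1 one_pos h
    have habs : ∫ K in Ioi (0:ℝ), ‖(min x K - min 1 K)/K^2‖ = Real.log x := by
      rw [setIntegral_congr_fun measurableSet_Ioi (g := fun K => (min x K - min 1 K)/K^2)]
      · rw [hv, Real.log_one, sub_zero]
      · intro K hK
        have h1 : min 1 K ≤ min x K := min_le_min h le_rfl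
        have h2 : (0:ℝ) ≤ K^2 := sq_nonneg K
        simp only [Real.norm_eq_abs]
        rw [abs_of_nonneg (div_nonneg (by linarith) h2)]
    refine ⟨hi, by rw [hv, Real.log_one, sub_zero], by
      rw [habs, abs_of_nonneg (Real.log_nonneg h)]⟩
  · obtain ⟨hi, hv⟩ := calc1 hx h
    have hneg : (fun K => (min x K - min 1 K)/K^2)
        = fun K => -((min 1 K - min x K)/K^2) := by
      funext K; ring
    have hi' : IntegrableOn (fun K => (min x K - min 1 K)/K^2) (Ioi (0:ℝ)) volume := by
      rw [hneg]; exact hi.neg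
    have hv' : ∫ K in Ioi (0:ℝ), (min x K - min 1 K)/K^2 = Real.log x := by
      rw [hneg, integral_neg, hv, Real.log_one]
      ring
    refine ⟨hi', hv', ?_⟩
    have habs : ∫ K in Ioi (0:ℝ), ‖(min x K - min 1 K)/K^2‖
        = ∫ K in Ioi (0:ℝ), (min 1 K - min x K)/K^2 := by
      apply setIntegral_congr_fun measurableSet_Ioi
      intro K hK
      have h1 : min x K ≤ min 1 K := min_le_min h le_rfl
      have h2 : (0:ℝ) ≤ K^2 := sq_nonneg K
      simp only [Real.norm_eq_abs]
      rw [abs_of_nonpos (by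
        apply div_nonpos_of_nonpos_of_nonneg (by linarith : x ⊓ K - 1 ⊓ K ≤ 0) h2)]
      ring
    rw [habs, hv, Real.log_one, abs_of_nonpos (Real.log_nonpos hx.le h)]
    ring

lemma fubini_log {S₀ : ℝ} {μ : Measure ℝ} (h : IsMarginal S₀ μ) :
    Integrable (fun K => ∫ x, (min x K - min 1 K)/K^2 ∂μ) (volume.restrict (Ioi (0:ℝ))) ∧
    ∫ K in Ioi (0:ℝ), (∫ x, (min x K - min 1 K)/K^2 ∂μ) = ∫ x, Real.log x ∂μ := by
  haveI := h.prob
  set f : ℝ → ℝ → ℝ := fun x K => (min x K - min 1 K)/K^2 with hfdef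
  have hmeas : AEStronglyMeasurable (Function.uncurry f)
      (μ.prod (volume.restrict (Ioi (0:ℝ)))) := by
    apply Measurable.aestronglyMeasurable
    apply Measurable.div
    · exact (measurable_fst.min measurable_snd).sub (measurable_const.min measurable_snd)
    · exact measurable_snd.pow measurable_const
  have hint : Integrable (Function.uncurry f) (μ.prod (volume.restrict (Ioi (0:ℝ)))) := by
    rw [integrable_prod_iff hmeas]
    constructor
    · filter_upwards [ae_pos h.conc] with x hx
      exact (keyint hx).1
    · apply h.int_log.congr
      filter_upwards [ae_pos h.conc] with x hx
      exact ((keyint hx).2.2).symm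
  have hswap := integral_integral_swap hint
  have hleft : ∫ x, (∫ K in Ioi (0:ℝ), f x K) ∂μ = ∫ x, Real.log x ∂μ := by
    apply integral_congr_ae
    filter_upwards [ae_pos h.conc] with x hx
    exact (keyint hx).2.1
  exact ⟨hint.integral_prod_right, by rw [← hswap, hleft]⟩

lemma cont_min_int {μ : Measure ℝ} [IsProbabilityMeasure μ]
    (h : Integrable (fun s => s) μ) :
    Continuous (fun K => ∫ s, min s K ∂μ) := by
  apply LipschitzWith.continuous (K := 1)
  apply LipschitzWith.of_dist_le_mul
  intro K K'
  rw [Real.dist_eq, Real.dist_eq, ← integral_sub (integrable_min_const h K)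
    (integrable_min_const h K')]
  have hb : |∫ s, (min s K - min s K') ∂μ| ≤ ∫ s, |min s K - min s K'| ∂μ := by
    simpa [Real.norm_eq_abs] using
      norm_integral_le_integral_norm (μ := μ) (f := fun s => min s K - min s K')
  have hmono : ∫ s, |min s K - min s K'| ∂μ ≤ ∫ _s, |K - K'| ∂μ := by
    apply integral_mono ((integrable_min_const h K).sub (integrable_min_const h K')).abs
      (integrable_const _)
    intro s
    exact min_lip s K K'
  rw [integral_const] at hmono
  simp only [probReal_univ, measure_univ, ENNReal.toReal_one, smul_eq_mul, one_mul] at hmono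
  simp only [NNReal.coe_one, one_mul]
  linarith

lemma D_zero {S₀ : ℝ} {μ₁ μ₂ : Measure ℝ} (h₁ : IsMarginal S₀ μ₁) (h₂ : IsMarginal S₀ μ₂)
    (hcall : ∀ K : ℝ, ∫ s, min s K ∂μ₂ ≤ ∫ s, min s K ∂μ₁)
    (hlog : ∫ s, Real.log s ∂μ₁ = ∫ s, Real.log s ∂μ₂) :
    ∀ K : ℝ, 0 < K → ∫ s, min s K ∂μ₁ = ∫ s, min s K ∂μ₂ := by
  haveI := h₁.prob; haveI := h₂.prob
  set D : ℝ → ℝ := fun K => (∫ s, min s K ∂μ₁) - ∫ s, min s K ∂μ₂ with hD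
  obtain ⟨ib1, iv1⟩ := fubini_log h₁
  obtain ⟨ib2, iv2⟩ := fubini_log h₂
  have hinner : ∀ (μ : Measure ℝ), IsProbabilityMeasure μ → Integrable (fun s => s) μ →
      ∀ K : ℝ, (∫ x, (min x K - min 1 K)/K^2 ∂μ)
        = ((∫ x, min x K ∂μ) - min 1 K)/K^2 := by
    intro μ hprob hid K
    rw [integral_div, integral_sub (integrable_min_const hid K) (integrable_const _),
      integral_const]
    simp [measure_univ]
  have hrw : ∀ K : ℝ, (∫ x, (min x K - min 1 K)/K^2 ∂μ₁)
      - (∫ x, (min x K - min 1 K)/K^2 ∂μ₂) = D K / K^2 := by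
    intro K
    rw [hinner μ₁ h₁.prob h₁.int_id K, hinner μ₂ h₂.prob h₂.int_id K, hD]
    ring
  have hzero : ∫ K in Ioi (0:ℝ), D K / K^2 = 0 := by
    rw [← setIntegral_congr_fun measurableSet_Ioi (fun K _ => hrw K)]
    rw [integral_sub ib1 ib2, iv1, iv2, hlog]
    ring
  have hint : Integrable (fun K => D K / K^2) (volume.restrict (Ioi (0:ℝ))) := by
    apply (ib1.sub ib2).congr
    filter_upwards with K
    exact hrw K
  have hnn : 0 ≤ᵐ[volume.restrict (Ioi (0:ℝ))] fun K => D K / K^2 := by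
    filter_upwards with K
    have := hcall K
    have hD0 : 0 ≤ D K := by rw [hD]; simp only; linarith
    positivity
  have haez := (integral_eq_zero_iff_of_nonneg_ae hnn hint).mp hzero
  -- continuity of D
  have hDcont : Continuous D := (cont_min_int h₁.int_id).sub (cont_min_int h₂.int_id)
  -- conclude pointwise
  intro K₀ hK₀
  by_contra hne
  have hDne : D K₀ ≠ 0 := sub_ne_zero.mpr hne
  have hev : ∀ᶠ K in 𝓝 K₀, D K ≠ 0 ∧ K ∈ Ioi (0:ℝ) :=
    (hDcont.continuousAt.eventually_ne hDne).and (isOpen_Ioi.eventually_mem hK₀)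
  obtain ⟨ε, hε, hball⟩ := Metric.eventually_nhds_iff_ball.mp hev
  -- the set where D K / K^2 ≠ 0 is null for the restricted measure
  have hSmeas : MeasurableSet {K : ℝ | ¬ (D K / K^2 = 0)} := by
    have hm : Measurable (fun K => D K / K^2) :=
      hDcont.measurable.div ((continuous_pow 2).measurable)
    exact (hm (measurableSet_singleton 0)).compl
  have hnull : (volume.restrict (Ioi (0:ℝ))) {K | ¬ (D K / K^2 = 0)} = 0 := by
    have h' := haez
    rw [EventuallyEq, ae_iff] at h'
    simpa using h'
  rw [Measure.restrict_apply hSmeas] at hnull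
  set ε' := min ε K₀ with hε'def
  have hε' : 0 < ε' := lt_min hε hK₀
  have hsub : Metric.ball K₀ ε' ⊆ {K : ℝ | ¬ (D K / K^2 = 0)} ∩ Ioi 0 := by
    intro K hK
    have hK' : K ∈ Metric.ball K₀ ε := Metric.ball_subset_ball (min_le_left _ _) hK
    obtain ⟨hne', hpos⟩ := hball K hK'
    refine ⟨?_, hpos⟩
    simp only [mem_setOf_eq]
    intro hzero
    rcases div_eq_zero_iff.mp hzero with h' | h'
    · exact hne' h'
    · exact (pow_ne_zero 2 (ne_of_gt (mem_Ioi.mp hpos))) h'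
  have hle : volume (Metric.ball K₀ ε') ≤ 0 := hnull ▸ measure_mono hsub
  exact absurd hle (not_le.mpr (Metric.measure_ball_pos volume K₀ hε'))

lemma measures_eq {μ₁ μ₂ : Measure ℝ} {S₀ : ℝ}
    (h₁ : IsMarginal S₀ μ₁) (h₂ : IsMarginal S₀ μ₂)
    (hmin : ∀ K : ℝ, 0 < K → ∫ s, min s K ∂μ₁ = ∫ s, min s K ∂μ₂) : μ₁ = μ₂ := by
  haveI := h₁.prob; haveI := h₂.prob
  have htail : ∀ K : ℝ, 0 < K → μ₁ (Ioi K) = μ₂ (Ioi K) := by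
    intro K hK
    set F : ℕ → ℝ → ℝ :=
      fun n s => ((n:ℝ)+1) * (min s (K + 1/((n:ℝ)+1)) - min s K) with hF
    have htend : ∀ (μ : Measure ℝ), IsProbabilityMeasure μ → Integrable (fun s => s) μ →
        Tendsto (fun n => ∫ s, F n s ∂μ) atTop (𝓝 ((μ (Ioi K)).toReal)) := by
      intro μ hprob hid
      have hind : (μ (Ioi K)).toReal = ∫ s, indicator (Ioi K) (fun _ => (1:ℝ)) s ∂μ := by
        rw [integral_indicator measurableSet_Ioi, setIntegral_const]
        simp
        rfl
      rw [hind]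
      apply tendsto_integral_of_dominated_convergence (fun _ => (1:ℝ))
      · intro n
        exact (((measurable_id.min measurable_const).sub
          (measurable_id.min measurable_const)).const_mul _).aestronglyMeasurable
      · exact integrable_const 1
      · intro n
        filter_upwards with s
        have hn1 : (0:ℝ) < (n:ℝ)+1 := by positivity
        rw [Real.norm_eq_abs, hF]
        simp only
        rw [abs_mul, abs_of_nonneg hn1.le]
        have hlip := min_lip s (K + 1/((n:ℝ)+1)) K
        have : |K + 1/((n:ℝ)+1) - K| = 1/((n:ℝ)+1) := by
          rw [add_sub_cancel_left, abs_of_nonneg (by positivity)]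
        rw [this] at hlip
        calc ((n:ℝ)+1) * |min s (K + 1/((n:ℝ)+1)) - min s K|
            ≤ ((n:ℝ)+1) * (1/((n:ℝ)+1)) := by nlinarith
          _ = 1 := by field_simp
      · filter_upwards with s
        rcases le_or_gt s K with hs | hs
        · have hz : ∀ n : ℕ, F n s = 0 := by
            intro n
            rw [hF]
            simp only
            rw [min_eq_left hs, min_eq_left (hs.trans (le_add_of_nonneg_right (by positivity)))]
            ring
          rw [indicator_of_notMem (by simpa using hs : s ∉ Ioi K)]
          simpa [hz] using (tendsto_const_nhds : Tendsto (fun _ : ℕ => (0:ℝ)) atTop (𝓝 0))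
        · rw [indicator_of_mem (mem_Ioi.mpr hs : s ∈ Ioi K)]
          refine Tendsto.congr' ?_ tendsto_const_nhds
          have hev : ∀ᶠ n : ℕ in atTop, 1/((n:ℝ)+1) ≤ s - K := by
            have h1 : Tendsto (fun n : ℕ => 1/((n:ℝ)+1)) atTop (𝓝 0) :=
              tendsto_one_div_add_atTop_nhds_zero_nat
            exact h1.eventually_le_const (by linarith : (0:ℝ) < s - K)
          filter_upwards [hev] with n hn
          rw [hF]
          simp only
          rw [min_eq_right (by linarith : K + 1/((n:ℝ)+1) ≤ s), min_eq_right hs.le]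
          field_simp
          ring
    have heq : ∀ n : ℕ, ∫ s, F n s ∂μ₁ = ∫ s, F n s ∂μ₂ := by
      intro n
      have hn1 : (0:ℝ) < (n:ℝ)+1 := by positivity
      rw [hF]
      simp only
      rw [integral_const_mul, integral_const_mul,
        integral_sub (integrable_min_const h₁.int_id _) (integrable_min_const h₁.int_id _),
        integral_sub (integrable_min_const h₂.int_id _) (integrable_min_const h₂.int_id _),
        hmin K hK, hmin (K + 1/((n:ℝ)+1)) (by positivity)]
    have hun : (μ₁ (Ioi K)).toReal = (μ₂ (Ioi K)).toReal := by
      apply tendsto_nhds_unique (htend μ₁ h₁.prob h₁.int_id)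
      have : (fun n => ∫ s, F n s ∂μ₁) = fun n => ∫ s, F n s ∂μ₂ := funext heq
      rw [this]
      exact htend μ₂ h₂.prob h₂.int_id
    exact (ENNReal.toReal_eq_toReal_iff' (measure_ne_top _ _) (measure_ne_top _ _)).mp hun
  have hIoi : ∀ a : ℝ, μ₁ (Ioi a) = μ₂ (Ioi a) := by
    intro a
    rcases lt_or_ge 0 a with h | h
    · exact htail a h
    · have h1 : ∀ (μ : Measure ℝ), IsProbabilityMeasure μ → μ (Set.Ioi (0:ℝ))ᶜ = 0 →
          μ (Ioi a) = 1 := by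
        intro μ hp hc
        have h0 : μ (Ioi (0:ℝ)) = 1 := (prob_compl_eq_zero_iff measurableSet_Ioi).mp hc
        refine le_antisymm prob_le_one ?_
        rw [← h0]
        exact measure_mono (Ioi_subset_Ioi h)
      rw [h1 μ₁ h₁.prob h₁.conc, h1 μ₂ h₂.prob h₂.conc]
  apply Measure.ext_of_Iic
  intro a
  rw [← compl_Ioi, measure_compl measurableSet_Ioi (measure_ne_top _ _),
    measure_compl measurableSet_Ioi (measure_ne_top _ _), hIoi a, measure_univ, measure_univ]

end VixAux

/-- The classical lower bound is optimal iff the two smiles coincide: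
`P_sub = 0 ↔ μ₁ = μ₂`. -/
theorem Psub_eq_zero_iff (τ S₀ : ℝ) (hτ : 0 < τ) (hS₀ : 0 < S₀)
    (μ₁ μ₂ : Measure ℝ) (h₁ : IsMarginal S₀ μ₁) (h₂ : IsMarginal S₀ μ₂) :
    PsubE τ μ₁ μ₂ = 0 ↔ μ₁ = μ₂ := by
  constructor
  · intro hP
    haveI := h₁.prob; haveI := h₂.prob
    have hPle : ∀ {u₁ u₂ : ℝ → ℝ} {ΔS ΔL : ℝ → ℝ → ℝ}, IsSubRep τ μ₁ μ₂ u₁ u₂ ΔS ΔL →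
        (∫ s, u₁ s ∂μ₁) + ∫ s, u₂ s ∂μ₂ ≤ 0 := fun h => price_nonpos hP h
    have hcall : ∀ K : ℝ, ∫ s, min s K ∂μ₂ ≤ ∫ s, min s K ∂μ₁ :=
      fun K => call_le h₁ h₂ hP K
    have hlog : ∫ s, Real.log s ∂μ₁ = ∫ s, Real.log s ∂μ₂ :=
      le_antisymm (log_le₁ hτ h₁ h₂ hPle) (log_le₂ hτ h₁ h₂ hP)
    exact measures_eq h₁ h₂ (D_zero h₁ h₂ hcall hlog)
  · intro heq
    subst heq
    haveI := h₁.prob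
    apply le_antisymm
    · apply sSup_le
      rintro y ⟨u₁, u₂, ΔS, ΔL, hrep, rfl⟩
      have key : ∀ s : ℝ, 0 < s → u₁ s + u₂ s ≤ 0 := by
        intro s hs
        have h0 := hrep.hedge s s 0 hs hs le_rfl
        rw [div_self hs.ne'] at h0
        simp [Lf, Real.log_one] at h0
        linarith
      have hle : (∫ s, u₁ s ∂μ₁) + ∫ s, u₂ s ∂μ₁ ≤ 0 := by
        rw [← integral_add hrep.int_u₁ hrep.int_u₂]
        apply integral_nonpos_of_ae
        filter_upwards [ae_pos h₁.conc] with s hs using key s hs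
      exact_mod_cast hle
    · apply le_sSup
      refine ⟨fun _ => 0, fun _ => 0, fun _ _ => 0, fun _ _ => 0,
        ⟨measurable_const, measurable_const, measurable_const, measurable_const,
          integrable_const 0, integrable_const 0, ?_⟩, by simp⟩
      intro s₁ s₂ v hs₁ hs₂ hv
      simpa using hv
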